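/- For every positive integer n, the partial order A_{n,·} on M^n equals the intersection of all term orders S on M^n satisfying x_1 > x_2 > ⋯ > x_n with respect to S; that is, (m, m') ∈ A_{n,·} if and only if m ≥ m' for every such term order S. -/

import Mathlib

/-- Total degree of a monomial in `n` variables, identified with its exponent
vector in `ℕ^n`. -/
def degF {n : ℕ} (m : Fin n → ℕ) : ℕ := ∑ i, m i

/-- Elementary move: `m = (x_i / x_j) · m'` for some `i < j` with `x_j ∣ m'`. -/
def ElemMoveF {n : ℕ} (m m' : Fin n → ℕ) : Prop :=
  ∃ i j : Fin n, i < j ∧ m + Pi.single j 1 = m' + Pi.single i 1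

/-- The strongly stable partial order `A_{n,d}`: reflexive–transitive closure of
elementary moves on monomials of degree `d`. -/
def AndF (n d : ℕ) (m m' : Fin n → ℕ) : Prop :=
  Relation.ReflTransGen (fun a b => degF a = d ∧ degF b = d ∧ ElemMoveF a b) m m'

/-- The divisibility order `D` on `Mⁿ`: `(m, m') ∈ D` iff `m'` divides `m`. -/
def DvdF {n : ℕ} (m m' : Fin n → ℕ) : Prop := ∃ t, m = m' + t

/-- `A_{n,·} = rtr(D ∪ ⋃_d A_{n,d})`. -/
def AnDotF (n : ℕ) (m m' : Fin n → ℕ) : Prop :=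
  Relation.ReflTransGen (fun a b => DvdF a b ∨ ∃ d, AndF n d a b) m m'

/-- A term order on `Mⁿ`: a linear order such that `1` is the smallest element
and which is compatible with multiplication. -/
def IsTermOrder {n : ℕ} (le : (Fin n → ℕ) → (Fin n → ℕ) → Prop) : Prop :=
  IsLinearOrder (Fin n → ℕ) le ∧ (∀ m, le 0 m) ∧
    ∀ m m' t, le m m' → le (t + m) (t + m')

def Sf {n : ℕ} (a : Fin n → ℕ) (k : ℕ) : ℕ :=
  ∑ i ∈ Finset.univ.filter (fun i : Fin n => (i : ℕ) < k), a i

lemma Sf_zero {n : ℕ} (a : Fin n → ℕ) : Sf a 0 = 0 := by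
  simp [Sf]

lemma Sf_add {n : ℕ} (a b : Fin n → ℕ) (k : ℕ) : Sf (a + b) k = Sf a k + Sf b k := by
  simp [Sf, Finset.sum_add_distrib]

lemma Sf_of_le {n : ℕ} (a : Fin n → ℕ) {k : ℕ} (h : n ≤ k) : Sf a k = degF a := by
  unfold Sf degF
  congr 1
  apply Finset.filter_true_of_mem
  intro i _
  exact lt_of_lt_of_le i.isLt h

lemma Sf_le_degF {n : ℕ} (a : Fin n → ℕ) (k : ℕ) : Sf a k ≤ degF a := by
  exact Finset.sum_le_sum_of_subset (Finset.filter_subset _ _)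

lemma Sf_succ {n : ℕ} (a : Fin n → ℕ) (k : ℕ) (h : k < n) :
    Sf a (k + 1) = Sf a k + a ⟨k, h⟩ := by
  unfold Sf
  have hset : Finset.univ.filter (fun i : Fin n => (i : ℕ) < k + 1)
      = insert ⟨k, h⟩ (Finset.univ.filter (fun i : Fin n => (i : ℕ) < k)) := by
    ext i
    simp only [Finset.mem_insert, Finset.mem_filter, Finset.mem_univ, true_and]
    constructor
    · rintro hik
      rcases Nat.lt_succ_iff_lt_or_eq.mp hik with h' | h'
      · exact Or.inr h'
      · exact Or.inl (Fin.ext h')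
    · rintro (rfl | h')
      · exact Nat.lt_succ_self _
      · exact Nat.lt_succ_of_lt h'
  rw [hset, Finset.sum_insert (by simp), add_comm]

lemma Sf_single {n : ℕ} (i : Fin n) (k : ℕ) :
    Sf (Pi.single i 1) k = if (i : ℕ) < k then 1 else 0 := by
  unfold Sf
  split_ifs with h
  · rw [Finset.sum_eq_single i]
    · simp
    · intro b _ hb; exact Pi.single_eq_of_ne hb 1
    · simp [h]
  · apply Finset.sum_eq_zero
    intro b hb
    simp only [Finset.mem_filter] at hb
    apply Pi.single_eq_of_ne
    rintro rfl; exact h hb.2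

lemma eq_of_Sf {n : ℕ} {a b : Fin n → ℕ} (h : ∀ k, Sf a k = Sf b k) : a = b := by
  funext i
  have h1 := Sf_succ a i i.isLt
  have h2 := Sf_succ b i i.isLt
  simp only [Fin.eta] at h1 h2
  have := h (i + 1)
  have := h i
  omega

def DomF {n : ℕ} (a b : Fin n → ℕ) : Prop := ∀ k, Sf b k ≤ Sf a k

def PhiF {n : ℕ} (a b : Fin n → ℕ) : ℕ := ∑ k ∈ Finset.range (n + 1), (Sf a k - Sf b k)

lemma degF_add {n : ℕ} (a b : Fin n → ℕ) : degF (a + b) = degF a + degF b := by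
  simp [degF, Finset.sum_add_distrib]

lemma degF_single {n : ℕ} (i : Fin n) : degF (Pi.single i 1) = 1 := by
  simp [degF]

lemma Sf_eq_degF {n : ℕ} (a : Fin n → ℕ) (k : ℕ) (h : ∀ i : Fin n, k ≤ (i : ℕ) → a i = 0) :
    Sf a k = degF a := by
  unfold Sf degF
  apply Finset.sum_subset (Finset.filter_subset _ _)
  intro i _ hi
  simp only [Finset.mem_filter, Finset.mem_univ, true_and, not_lt] at hi
  exact h i hi

lemma exists_step {n : ℕ} (m m' : Fin n → ℕ) (hdom : DomF m m') (hne : m ≠ m') :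
    ∃ m'', (DvdF m m'' ∨ ∃ d, AndF n d m m'') ∧ DomF m'' m' ∧ PhiF m'' m' < PhiF m m' := by
  classical
  have hdle : degF m' ≤ degF m := by
    have := hdom n
    rwa [Sf_of_le m le_rfl, Sf_of_le m' le_rfl] at this
  rcases eq_or_lt_of_le hdle with hdeg | hdeg
  · -- equal degrees: elementary move
    have hex : ∃ k, Sf m' k < Sf m k := by
      by_contra h
      push_neg at h
      exact hne (eq_of_Sf fun k => le_antisymm (h k) (hdom k))
    have hfind := Nat.find_spec hex
    have hne0 : Nat.find hex ≠ 0 := by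
      intro h; rw [h, Sf_zero, Sf_zero] at hfind; omega
    obtain ⟨c, hcdef⟩ : ∃ c, Nat.find hex = c + 1 :=
      ⟨Nat.find hex - 1, by omega⟩
    rw [hcdef] at hfind
    have hj0 : Sf m' (c + 1) < Sf m (c + 1) := hfind
    have hmin : ∀ k < c + 1, Sf m k = Sf m' k := fun k hk =>
      le_antisymm (not_lt.mp (Nat.find_min hex (by omega))) (hdom k)
    have hj0n : c + 1 < n := by
      rcases lt_or_ge (c + 1) n with h | h
      · exact h
      · exfalso
        rw [Sf_of_le m h, Sf_of_le m' h, ← hdeg] at hj0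
        exact lt_irrefl _ hj0
    have hc : c < n := by omega
    have hexb : ∃ k, c + 1 < k ∧ Sf m k = Sf m' k := by
      refine ⟨n, hj0n, ?_⟩
      rw [Sf_of_le m le_rfl, Sf_of_le m' le_rfl, hdeg]
    have hbspec := Nat.find_spec hexb
    have hbne : Nat.find hexb ≠ 0 := by omega
    obtain ⟨d, hddef⟩ : ∃ d, Nat.find hexb = d + 1 :=
      ⟨Nat.find hexb - 1, by omega⟩
    rw [hddef] at hbspec
    have hbn : d + 1 ≤ n := by
      have h2 : Nat.find hexb ≤ n :=
        Nat.find_le ⟨hj0n, by rw [Sf_of_le m le_rfl, Sf_of_le m' le_rfl, hdeg]⟩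
      omega
    have hd : d < n := by omega
    have hcd : c < d := by omega
    have hbmin : ∀ k < d + 1, ¬(c + 1 < k ∧ Sf m k = Sf m' k) := fun k hk =>
      Nat.find_min hexb (by omega)
    have hstrict : ∀ k, c + 1 ≤ k → k ≤ d → Sf m' k < Sf m k := by
      intro k hk1 hk2
      rcases eq_or_lt_of_le hk1 with h | h
      · rw [← h]; exact hj0
      · have h2 := hbmin k (by omega)
        push_neg at h2
        exact lt_of_le_of_ne (hdom k) (Ne.symm (h2 h))
    set ci : Fin n := ⟨c, hc⟩ with hcidef
    set di : Fin n := ⟨d, hd⟩ with hdidef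
    have hne_cd : ci ≠ di := by
      intro h
      exact absurd (congrArg Fin.val h) (by simpa using Nat.ne_of_lt hcd)
    have hmc : 1 ≤ m ci := by
      have h1 := Sf_succ m c hc
      have h2 := Sf_succ m' c hc
      have h3 := hmin c (by omega)
      show 1 ≤ m ⟨c, hc⟩
      omega
    set m'' : Fin n → ℕ := fun x => m x + (Pi.single di 1 : Fin n → ℕ) x - (Pi.single ci 1 : Fin n → ℕ) x with hm''def
    have heq : m + Pi.single di 1 = m'' + Pi.single ci 1 := by
      funext x
      simp only [Pi.add_apply, hm''def]
      rcases eq_or_ne x ci with rfl | h1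
      · rw [Pi.single_eq_same, Pi.single_eq_of_ne hne_cd]
        omega
      · rw [Pi.single_eq_of_ne h1]
        omega
    have hdeg'' : degF m'' = degF m := by
      have := congrArg degF heq
      rw [degF_add, degF_add, degF_single, degF_single] at this
      omega
    have hS : ∀ k, Sf m k + Sf (Pi.single di 1) k = Sf m'' k + Sf (Pi.single ci 1) k := by
      intro k
      have := congrArg (fun a => Sf a k) heq
      simpa [Sf_add] using this
    have hSc : ∀ k, Sf m k + (if d < k then 1 else 0) = Sf m'' k + (if c < k then 1 else 0) := by
      intro k
      have := hS k
      rwa [Sf_single, Sf_single] at this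
    have hdom'' : DomF m'' m' := by
      intro k
      have hs := hSc k
      by_cases hk2 : d < k
      · rw [if_pos hk2, if_pos (by omega)] at hs
        have := hdom k
        omega
      · by_cases hk1 : c < k
        · rw [if_neg hk2, if_pos hk1] at hs
          have := hstrict k (by omega) (by omega)
          omega
        · rw [if_neg hk2, if_neg hk1] at hs
          have := hdom k
          omega
    refine ⟨m'', Or.inr ⟨degF m, Relation.ReflTransGen.single ⟨rfl, hdeg'', ci, di, Fin.mk_lt_mk.mpr hcd, heq⟩⟩,
      hdom'', ?_⟩
    apply Finset.sum_lt_sum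
    · intro k _
      have hs := hSc k
      have h1 : Sf m'' k ≤ Sf m k := by
        split_ifs at hs <;> omega
      omega
    · refine ⟨c + 1, Finset.mem_range.mpr (by omega), ?_⟩
      have hs := hSc (c + 1)
      rw [if_neg (by omega), if_pos (by omega)] at hs
      omega
  · -- strictly bigger degree : divisibility step
    have hm0 : degF m ≠ 0 := by omega
    have hPne : (Finset.univ.filter (fun i : Fin n => m i ≠ 0)).Nonempty := by
      obtain ⟨i, _, hi⟩ := Finset.exists_ne_zero_of_sum_ne_zero hm0
      exact ⟨i, by simp [hi]⟩
    set p := (Finset.univ.filter (fun i : Fin n => m i ≠ 0)).max' hPne with hpdef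
    have hp : m p ≠ 0 := by
      have := Finset.max'_mem _ hPne
      simpa using this
    have hmax : ∀ i : Fin n, p < i → m i = 0 := by
      intro i hi
      by_contra h
      exact absurd (Finset.le_max' _ i (by simp [h])) (not_le.mpr hi)
    set m'' : Fin n → ℕ := fun x => m x - (Pi.single p 1 : Fin n → ℕ) x with hm''def
    have heq : m = m'' + Pi.single p 1 := by
      funext x
      simp only [Pi.add_apply, hm''def]
      rcases eq_or_ne x p with rfl | h1
      · rw [Pi.single_eq_same]; omega
      · rw [Pi.single_eq_of_ne h1]; omega
    have hS : ∀ k, Sf m k = Sf m'' k + (if (p : ℕ) < k then 1 else 0) := by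
      intro k
      have := congrArg (fun a => Sf a k) heq
      rw [← Sf_single p k]
      simpa [Sf_add] using this
    have hdom'' : DomF m'' m' := by
      intro k
      have hs := hS k
      by_cases hk : (p : ℕ) < k
      · rw [if_pos hk] at hs
        have h1 : Sf m k = degF m := Sf_eq_degF m k (fun i hi => hmax i (Fin.lt_def.mpr (lt_of_lt_of_le hk hi)))
        have h2 : Sf m' k ≤ degF m' := Sf_le_degF m' k
        omega
      · rw [if_neg hk] at hs
        have := hdom k
        omega
    refine ⟨m'', Or.inl ⟨Pi.single p 1, heq⟩, hdom'', ?_⟩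
    apply Finset.sum_lt_sum
    · intro k _
      have hs := hS k
      split_ifs at hs <;> omega
    · refine ⟨n, Finset.mem_range.mpr (by omega), ?_⟩
      have hs := hS n
      rw [if_pos p.isLt] at hs
      have h1 := hdom n
      rw [Sf_of_le m le_rfl, Sf_of_le m' le_rfl] at *
      omega

lemma dom_to_an {n : ℕ} (N : ℕ) :
    ∀ m m' : Fin n → ℕ, PhiF m m' ≤ N → DomF m m' → AnDotF n m m' := by
  induction N with
  | zero =>
    intro m m' hphi hdom
    by_cases hmm : m = m'
    · exact hmm ▸ Relation.ReflTransGen.refl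
    · obtain ⟨m'', _, _, hlt⟩ := exists_step m m' hdom hmm
      omega
  | succ N ih =>
    intro m m' hphi hdom
    by_cases hmm : m = m'
    · exact hmm ▸ Relation.ReflTransGen.refl
    · obtain ⟨m'', hstep, hdom'', hlt⟩ := exists_step m m' hdom hmm
      exact Relation.ReflTransGen.head hstep (ih m'' m' (by omega) hdom'')

lemma dom_of_step {n : ℕ} {a b : Fin n → ℕ}
    (h : DvdF a b ∨ ∃ d, AndF n d a b) : DomF a b := by
  rcases h with ⟨t, rfl⟩ | ⟨d, h⟩
  · intro k; rw [Sf_add]; exact Nat.le_add_right _ _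
  · induction h with
    | refl => exact fun k => le_rfl
    | tail _ hstep ih =>
      obtain ⟨_, _, i, j, hij, heq⟩ := hstep
      intro k
      have hs := congrArg (fun a => Sf a k) heq
      simp only [Sf_add, Sf_single] at hs
      have hcoe : (i : ℕ) < (j : ℕ) := hij
      have := ih k
      split_ifs at hs <;> omega

lemma dom_of_anDot {n : ℕ} {m m' : Fin n → ℕ} (h : AnDotF n m m') : DomF m m' := by
  induction h with
  | refl => exact fun k => le_rfl
  | tail _ hstep ih => exact fun k => le_trans (dom_of_step hstep k) (ih k)

section LexStuff

variable {n : ℕ}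

noncomputable instance lexLO (n : ℕ) : LinearOrder (Lex (Fin n → ℕ)) :=
  @Pi.Lex.linearOrder (Fin n) (fun _ => ℕ) Fin.instLinearOrder
    ⟨(Fin.Lt.isWellOrder n).toIsWellFounded.wf⟩ (fun _ => inferInstance)

lemma lex_zero_le (a : Fin n → ℕ) : toLex (0 : Fin n → ℕ) ≤ toLex a := by
  have := @Pi.toLex_monotone (Fin n) (fun _ => ℕ) _ _ ⟨(Fin.Lt.isWellOrder n).toIsWellFounded.wf⟩
  exact this (fun i => Nat.zero_le _)

lemma lex_lt_iff {a b : Fin n → ℕ} :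
    toLex a < toLex b ↔ ∃ i, (∀ j, j < i → a j = b j) ∧ a i < b i :=
  Iff.rfl

lemma lex_add_le {a b t : Fin n → ℕ} (h : toLex a ≤ toLex b) :
    toLex (t + a) ≤ toLex (t + b) := by
  rcases le_iff_lt_or_eq.mp h with h | h
  · apply le_of_lt
    obtain ⟨i, hbef, hlt⟩ := lex_lt_iff.mp h
    exact lex_lt_iff.mpr ⟨i, fun j hj => by simp [hbef j hj], by simpa using hlt⟩
  · have : a = b := toLex.injective.eq_iff.mp h
    rw [this]

lemma lex_single_lt {i j : Fin n} (hij : i < j) :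
    toLex (Pi.single j 1 : Fin n → ℕ) < toLex (Pi.single i 1 : Fin n → ℕ) := by
  refine lex_lt_iff.mpr ⟨i, fun x hx => ?_, ?_⟩
  · rw [Pi.single_eq_of_ne (ne_of_lt (lt_trans hx hij)), Pi.single_eq_of_ne (ne_of_lt hx)]
  · rw [Pi.single_eq_of_ne (ne_of_lt hij), Pi.single_eq_same]
    exact Nat.zero_lt_one

/-- Weight-then-lex order. -/
def TOrd (k0 : ℕ) (a b : Fin n → ℕ) : Prop :=
  Sf a k0 < Sf b k0 ∨ (Sf a k0 = Sf b k0 ∧ toLex a ≤ toLex b)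

lemma TOrd_isTermOrder (k0 : ℕ) : IsTermOrder (n := n) (TOrd k0) := by
  refine ⟨{ refl := ?_, trans := ?_, antisymm := ?_, total := ?_ }, ?_, ?_⟩
  · intro a
    exact Or.inr ⟨rfl, le_rfl⟩
  · rintro a b c (hab | ⟨hab, hab'⟩) (hbc | ⟨hbc, hbc'⟩)
    · exact Or.inl (lt_trans hab hbc)
    · exact Or.inl (hbc ▸ hab)
    · exact Or.inl (hab ▸ hbc)
    · exact Or.inr ⟨hab.trans hbc, le_trans hab' hbc'⟩
  · rintro a b (hab | ⟨hab, hab'⟩) (hba | ⟨hba, hba'⟩)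
    · omega
    · omega
    · omega
    · exact toLex.injective (le_antisymm hab' hba')
  · intro a b
    rcases lt_trichotomy (Sf a k0) (Sf b k0) with h | h | h
    · exact Or.inl (Or.inl h)
    · rcases le_total (toLex a) (toLex b) with h' | h'
      · exact Or.inl (Or.inr ⟨h, h'⟩)
      · exact Or.inr (Or.inr ⟨h.symm, h'⟩)
    · exact Or.inr (Or.inl h)
  · intro a
    rcases Nat.lt_or_ge (Sf (0 : Fin n → ℕ) k0) (Sf a k0) with h | h
    · exact Or.inl h
    · refine Or.inr ⟨?_, lex_zero_le a⟩
      have : Sf (0 : Fin n → ℕ) k0 = 0 := by simp [Sf]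
      have h2 : (0:ℕ) ≤ Sf a k0 := Nat.zero_le _
      omega
  · rintro a b t (hab | ⟨hab, hab'⟩)
    · exact Or.inl (by rw [Sf_add, Sf_add]; omega)
    · exact Or.inr ⟨by rw [Sf_add, Sf_add, hab], lex_add_le hab'⟩



lemma TOrd_singles (k0 : ℕ) {i j : Fin n} (hij : i < j) :
    TOrd k0 (Pi.single j 1 : Fin n → ℕ) (Pi.single i 1) ∧
      ¬ TOrd k0 (Pi.single i 1 : Fin n → ℕ) (Pi.single j 1) := by
  have hij' : (i : ℕ) < (j : ℕ) := hij
  have hlex := lex_single_lt hij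
  have hab : Sf (Pi.single j 1 : Fin n → ℕ) k0 ≤ Sf (Pi.single i 1 : Fin n → ℕ) k0 := by
    rw [Sf_single, Sf_single]; split_ifs <;> omega
  rcases eq_or_lt_of_le hab with heq | hlt
  · refine ⟨Or.inr ⟨heq, hlex.le⟩, ?_⟩
    rintro (h1 | ⟨_, h3⟩)
    · omega
    · exact LT.lt.not_ge hlex h3
  · exact ⟨Or.inl hlt, by rintro (h1 | ⟨hh, _⟩) <;> omega⟩

lemma termOrder_cancel {le : (Fin n → ℕ) → (Fin n → ℕ) → Prop} (hto : IsTermOrder le)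
    {t a b : Fin n → ℕ} (h : le (t + a) (t + b)) : le a b := by
  by_contra hab
  rcases hto.1.toTotal.total a b with h' | h'
  · exact hab h'
  · have h2 : le (t + b) (t + a) := hto.2.2 b a t h'
    have h3 : t + a = t + b := hto.1.toIsPartialOrder.toAntisymm.antisymm _ _ h h2
    have h4 : a = b := add_left_cancel h3
    exact hab (h4 ▸ hto.1.toIsPartialOrder.toIsPreorder.toRefl.refl a)

lemma an_to_orders {m m' : Fin n → ℕ} (h : AnDotF n m m')
    {le : (Fin n → ℕ) → (Fin n → ℕ) → Prop} (hto : IsTermOrder le)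
    (hs : ∀ i j : Fin n, i < j →
      le (Pi.single j 1) (Pi.single i 1) ∧ ¬ le (Pi.single i 1) (Pi.single j 1)) :
    le m' m := by
  have hrefl := hto.1.toIsPartialOrder.toIsPreorder.toRefl.refl
  have htrans := hto.1.toIsPartialOrder.toIsPreorder.toIsTrans.trans
  induction h with
  | refl => exact hrefl m
  | @tail b c _ hstep ih =>
    refine htrans _ _ _ ?_ ih
    rcases hstep with ⟨t, rfl⟩ | ⟨d, hd⟩
    · have := hto.2.2 0 t c (hto.2.1 t)
      simpa using this
    · clear ih
      induction hd with
      | refl => exact hrefl _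
      | @tail b2 c2 _ hstep2 ih2 =>
        refine htrans _ _ _ ?_ ih2
        obtain ⟨_, _, i, j, hij, heq⟩ := hstep2
        have h1 : le (b2 + Pi.single j 1) (b2 + Pi.single i 1) :=
          hto.2.2 _ _ b2 (hs i j hij).1
        rw [heq] at h1
        rw [add_comm c2, add_comm b2] at h1
        exact termOrder_cancel hto h1


end LexStuff

/-- For every positive integer `n`, the partial order `A_{n,·}`
on `Mⁿ` is the intersection of all term orders `S` with `x₁ > x₂ > ⋯ > x_n`:
`(m, m') ∈ A_{n,·}` iff `m ≥ m'` for every such term order. -/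
theorem stmt11 (n : ℕ) (hn : 0 < n) (m m' : Fin n → ℕ) :
    AnDotF n m m' ↔
      ∀ le : (Fin n → ℕ) → (Fin n → ℕ) → Prop, IsTermOrder le →
        (∀ i j : Fin n, i < j →
          le (Pi.single j 1) (Pi.single i 1) ∧ ¬ le (Pi.single i 1) (Pi.single j 1)) →
        le m' m := by
  constructor
  · intro h le hto hs
    exact an_to_orders h hto hs
  · intro H
    apply dom_to_an (PhiF m m') m m' le_rfl
    intro k0
    have h := H (TOrd k0) (TOrd_isTermOrder k0) (fun i j hij => TOrd_singles k0 hij)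
    rcases h with h | ⟨h, _⟩
    · exact le_of_lt h
    · exact le_of_eq h
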